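/- (Sandwich Lemma) Let (n_k) be a sequence of non-zero integers such that P⁺(n_k) → ∞ as k → ∞ and the insulators 𝔦(n_k) are bounded. Let α and β be real numbers with 0 < α < log 2 and β > log 4. Then for all sufficiently large k, the inequality α · P⁺(n_k) < log rad(n_k) < β · P⁺(n_k) holds. -/

import Mathlib

open Filter

/-- `(A,B,C)` is a primitive non-cuspidal solution to `A + B + C = 0`. -/
def IsABC (A B C : ℤ) : Prop :=
  A + B + C = 0 ∧ Int.gcd (Int.gcd A B) C = 1 ∧ A * B * C ≠ 0

/-- The height `H(A,B,C) = max {|A|, |B|, |C|}`. -/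
def height (A B C : ℤ) : ℤ := max |A| (max |B| |C|)

/-- The radical of a nonzero integer: its largest squarefree divisor,
the product of the distinct primes dividing it. -/
def rad (n : ℤ) : ℕ := ∏ p ∈ n.natAbs.primeFactors, p

/-- `P⁺(n)`: the largest prime divisor of `n`, or `1` if `|n| = 1`. -/
def Pplus (n : ℤ) : ℕ := max (n.natAbs.primeFactors.sup id) 1

/-- A nonzero integer `m` is insulated if every prime `p ≤ P⁺(m)` divides `m`. -/
def Insulated (m : ℤ) : Prop :=
  m ≠ 0 ∧ ∀ p : ℕ, p.Prime → p ≤ Pplus m → (p : ℤ) ∣ m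

/-- The insulator `𝔦(n)`: the smallest positive integer `I` such that `n * I` is insulated. -/
noncomputable def insulator (n : ℤ) : ℕ := sInf {I : ℕ | 0 < I ∧ Insulated (n * I)}

namespace SandwichAux

lemma primorial_mono : Monotone primorial := by
  intro a b hab
  apply Finset.prod_le_prod_of_subset_of_one_le'
  · exact Finset.filter_subset_filter _ (Finset.range_subset_range.2 (by omega))
  · intro i hi _
    exact (Finset.mem_filter.1 hi).2.one_lt.le

lemma prime_dvd_primorial {p m : ℕ} (hp : p.Prime) (h : p ≤ m) : p ∣ primorial m :=
  Finset.dvd_prod_of_mem _ (Finset.mem_filter.2 ⟨Finset.mem_range.2 (by omega), hp⟩)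

lemma prime_le_of_dvd_primorial {p m : ℕ} (hp : p.Prime) (h : p ∣ primorial m) : p ≤ m := by
  obtain ⟨q, hq, hpq⟩ := hp.prime.exists_mem_finset_dvd h
  rw [Finset.mem_filter, Finset.mem_range] at hq
  have := (Nat.prime_dvd_prime_iff_eq hp hq.2).mp hpq
  omega

lemma centralBinom_le (m : ℕ) (hm : 0 < m) :
    Nat.centralBinom m ≤ (2 * m) ^ Nat.sqrt (2 * m) * primorial (2 * m) := by
  have hN : Nat.centralBinom m ≠ 0 := (Nat.centralBinom_pos m).ne'
  set N := Nat.centralBinom m with hNdef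
  have hfac : ∀ p : ℕ, p ^ N.factorization p ≤ 2 * m := by
    intro p
    exact Nat.pow_factorization_choose_le (by omega)
  have hple : ∀ p ∈ N.primeFactors, p ≤ 2 * m := by
    intro p hp
    have hp' := Nat.prime_of_mem_primeFactors hp
    have hν : N.factorization p ≠ 0 := by
      simpa [Nat.support_factorization] using Finsupp.mem_support_iff.1 (by
        rwa [Nat.support_factorization])
    calc p = p ^ 1 := (pow_one p).symm
    _ ≤ p ^ N.factorization p := Nat.pow_le_pow_right hp'.pos (by omega)
    _ ≤ 2 * m := hfac p
  have key : ∏ p ∈ N.primeFactors, p ^ N.factorization p = N := by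
    rw [← Nat.support_factorization]
    exact Nat.factorization_prod_pow_eq_self hN
  rw [← key, ← Finset.prod_filter_mul_prod_filter_not N.primeFactors
    (fun p => p ≤ Nat.sqrt (2 * m))]
  have h1 : ∏ p ∈ N.primeFactors.filter (fun p => p ≤ Nat.sqrt (2 * m)),
      p ^ N.factorization p ≤ (2 * m) ^ Nat.sqrt (2 * m) := by
    calc ∏ p ∈ N.primeFactors.filter (fun p => p ≤ Nat.sqrt (2 * m)), p ^ N.factorization p
        ≤ ∏ _p ∈ N.primeFactors.filter (fun p => p ≤ Nat.sqrt (2 * m)), (2 * m) :=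
          Finset.prod_le_prod' (fun p _ => hfac p)
      _ = (2 * m) ^ (N.primeFactors.filter (fun p => p ≤ Nat.sqrt (2 * m))).card :=
          Finset.prod_const _
      _ ≤ (2 * m) ^ Nat.sqrt (2 * m) := by
          apply Nat.pow_le_pow_right (by omega)
          have hsub : N.primeFactors.filter (fun p => p ≤ Nat.sqrt (2 * m)) ⊆
              Finset.Icc 2 (Nat.sqrt (2 * m)) := by
            intro p hp
            rw [Finset.mem_filter] at hp
            exact Finset.mem_Icc.2 ⟨(Nat.prime_of_mem_primeFactors hp.1).two_le, hp.2⟩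
          calc _ ≤ (Finset.Icc 2 (Nat.sqrt (2 * m))).card := Finset.card_le_card hsub
          _ = Nat.sqrt (2 * m) + 1 - 2 := Nat.card_Icc _ _
          _ ≤ Nat.sqrt (2 * m) := by omega
  have h2 : ∏ p ∈ N.primeFactors.filter (fun p => ¬ p ≤ Nat.sqrt (2 * m)),
      p ^ N.factorization p ≤ primorial (2 * m) := by
    calc ∏ p ∈ N.primeFactors.filter (fun p => ¬ p ≤ Nat.sqrt (2 * m)), p ^ N.factorization p
        ≤ ∏ p ∈ N.primeFactors.filter (fun p => ¬ p ≤ Nat.sqrt (2 * m)), p := by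
          apply Finset.prod_le_prod'
          intro p hp
          rw [Finset.mem_filter] at hp
          have hp' := Nat.prime_of_mem_primeFactors hp.1
          have hν : N.factorization p ≤ 1 :=
            Nat.factorization_choose_le_one (Nat.sqrt_lt'.1 (by omega))
          calc p ^ N.factorization p ≤ p ^ 1 := Nat.pow_le_pow_right hp'.pos hν
          _ = p := pow_one p
      _ ≤ primorial (2 * m) := by
          apply Nat.le_of_dvd (primorial_pos _)
          apply Finset.prod_dvd_prod_of_subset
          intro p hp
          rw [Finset.mem_filter] at hp
          exact Finset.mem_filter.2 ⟨Finset.mem_range.2 (by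
            have := hple p hp.1; omega), Nat.prime_of_mem_primeFactors hp.1⟩
  exact Nat.mul_le_mul h1 h2

lemma log_primorial_two_mul (m : ℕ) (hm : 4 ≤ m) :
    (m : ℝ) * Real.log 4 ≤
      (Real.sqrt (2 * (m:ℝ)) + 1) * Real.log (2 * (m:ℝ)) + Real.log (primorial (2 * m)) := by
  have h1 : (4:ℕ) ^ m < m * Nat.centralBinom m := Nat.four_pow_lt_mul_centralBinom m hm
  have h2 : Nat.centralBinom m ≤ (2*m) ^ Nat.sqrt (2*m) * primorial (2*m) :=
    centralBinom_le m (by omega)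
  have h3 : (4:ℕ) ^ m ≤ (2*m) ^ (Nat.sqrt (2*m) + 1) * primorial (2*m) :=
    calc (4:ℕ)^m ≤ m * Nat.centralBinom m := h1.le
    _ ≤ m * ((2*m) ^ Nat.sqrt (2*m) * primorial (2*m)) := Nat.mul_le_mul_left _ h2
    _ ≤ (2*m) * ((2*m) ^ Nat.sqrt (2*m) * primorial (2*m)) :=
        Nat.mul_le_mul_right _ (by omega)
    _ = (2*m) ^ (Nat.sqrt (2*m)+1) * primorial (2*m) := by ring
  have hcast : (4:ℝ) ^ m ≤ (2*(m:ℝ)) ^ (Nat.sqrt (2*m)+1) * (primorial (2*m) : ℝ) := by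
    exact_mod_cast h3
  have hppos : (0:ℝ) < (primorial (2*m) : ℝ) := by exact_mod_cast primorial_pos (2*m)
  have hmpos : (0:ℝ) < 2*(m:ℝ) := by positivity
  have hlog := Real.log_le_log (by positivity) hcast
  rw [Real.log_pow, Real.log_mul (by positivity) hppos.ne', Real.log_pow] at hlog
  have hs : ((Nat.sqrt (2*m) : ℝ)) ≤ Real.sqrt (2*(m:ℝ)) := by
    have := Real.nat_sqrt_le_real_sqrt (a := 2*m)
    push_cast at this ⊢
    convert this using 3
  have hlognn : 0 ≤ Real.log (2*(m:ℝ)) := Real.log_nonneg (by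
    have : (4:ℝ) ≤ (m:ℝ) := by exact_mod_cast hm
    linarith)
  push_cast at hlog
  nlinarith [hlog, mul_le_mul_of_nonneg_right hs hlognn]

lemma littleo_sqrt_log :
    (fun y : ℝ => (Real.sqrt y + 1) * Real.log y) =o[atTop] (fun y : ℝ => y) := by
  have h2 : (fun y : ℝ => Real.log y) =o[atTop] (fun y : ℝ => y) :=
    Real.isLittleO_log_id_atTop
  have h1 : (fun y : ℝ => Real.sqrt y * Real.log y) =o[atTop] (fun y : ℝ => y) := by
    have hlog : Real.log =o[atTop] fun y : ℝ => y ^ (1/2 : ℝ) :=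
      isLittleO_log_rpow_atTop (by norm_num)
    have hsqrt : (fun y : ℝ => Real.sqrt y) =O[atTop] (fun y : ℝ => y ^ (1/2 : ℝ)) := by
      apply Asymptotics.IsBigO.of_bound 1
      filter_upwards [eventually_ge_atTop (0:ℝ)] with y hy
      rw [Real.sqrt_eq_rpow, one_mul]
    have hmul := hsqrt.mul_isLittleO hlog
    refine hmul.trans_isBigO ?_
    apply Asymptotics.IsBigO.of_bound 1
    filter_upwards [eventually_gt_atTop (0:ℝ)] with y hy
    rw [one_mul, Real.norm_eq_abs, Real.norm_eq_abs, ← Real.rpow_add hy]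
    norm_num
  have := h1.add h2
  simpa [add_mul, one_mul] using this

lemma theta_lower {α : ℝ} (hα0 : 0 < α) (hα : α < Real.log 2) (C : ℝ) :
    ∀ᶠ x : ℕ in atTop, α * x + C < Real.log (primorial x) := by
  set ε := Real.log 2 - α with hεdef
  have hε : 0 < ε := by rw [hεdef]; linarith
  have hcomp : Tendsto (fun m : ℕ => 2 * (m:ℝ)) atTop atTop :=
    (tendsto_natCast_atTop_atTop (R := ℝ)).const_mul_atTop two_pos
  have hg : (fun m : ℕ => (Real.sqrt (2*(m:ℝ)) + 1) * Real.log (2*(m:ℝ))) =o[atTop]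
      fun m : ℕ => (m:ℝ) := by
    have h := littleo_sqrt_log.comp_tendsto hcomp
    refine h.trans_isBigO ?_
    apply Asymptotics.IsBigO.of_bound 2
    filter_upwards with m
    exact le_of_eq (by simp [norm_mul])
  have hb := hg.bound hε
  have hm3 : ∀ᶠ m : ℕ in atTop, α + C < ε * m :=
    (((tendsto_natCast_atTop_atTop (R := ℝ)).const_mul_atTop hε).eventually_gt_atTop (α + C))
  have key : ∀ᶠ m : ℕ in atTop, α * (2*(m:ℝ)+1) + C < Real.log (primorial (2*m)) := by
    filter_upwards [hb, hm3, eventually_ge_atTop 4] with m hbm hm3m hm4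
    have hlow := log_primorial_two_mul m hm4
    have hgle : (Real.sqrt (2*(m:ℝ)) + 1) * Real.log (2*(m:ℝ)) ≤ ε * m := by
      rw [Real.norm_eq_abs, Real.norm_eq_abs,
        abs_of_nonneg (show (0:ℝ) ≤ (m:ℝ) from Nat.cast_nonneg m)] at hbm
      exact le_trans (le_abs_self _) hbm
    have hlog4 : Real.log 4 = 2 * Real.log 2 := by
      rw [(by norm_num : (4:ℝ) = 2^2), Real.log_pow]; push_cast; ring
    have hεα : Real.log 2 = α + ε := by rw [hεdef]; ring
    nlinarith [hlow, hgle]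
  have hdiv : Tendsto (fun x : ℕ => x / 2) atTop atTop := by
    apply tendsto_atTop_atTop.2
    intro b; exact ⟨2*b, fun a ha => by omega⟩
  filter_upwards [hdiv.eventually key] with x hx
  have h1 : (x:ℝ) ≤ 2*((x/2 : ℕ):ℝ)+1 := by
    have : x ≤ 2*(x/2)+1 := by omega
    exact_mod_cast this
  have h2 : Real.log (primorial (2*(x/2))) ≤ Real.log (primorial x) := by
    apply Real.log_le_log (by exact_mod_cast primorial_pos _)
    exact_mod_cast primorial_mono (show 2*(x/2) ≤ x by omega)
  have h3 := mul_le_mul_of_nonneg_left h1 hα0.le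
  linarith

lemma rad_pos (n : ℤ) : 0 < rad n :=
  Finset.prod_pos fun _p hp => (Nat.prime_of_mem_primeFactors hp).pos

lemma one_le_Pplus (n : ℤ) : 1 ≤ Pplus n := le_max_right _ _

lemma le_Pplus_of_mem {n : ℤ} {p : ℕ} (hp : p ∈ n.natAbs.primeFactors) : p ≤ Pplus n :=
  le_trans (Finset.le_sup (f := id) hp) (le_max_left _ _)

lemma rad_dvd_primorial (n : ℤ) : rad n ∣ primorial (Pplus n) := by
  apply Finset.prod_dvd_prod_of_subset
  intro p hp
  exact Finset.mem_filter.2 ⟨Finset.mem_range.2 (by have := le_Pplus_of_mem hp; omega),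
    Nat.prime_of_mem_primeFactors hp⟩

lemma Pplus_le_of_dvd {a b : ℤ} (h : a ∣ b) (hb : b ≠ 0) : Pplus a ≤ Pplus b := by
  apply max_le _ (one_le_Pplus b)
  apply Finset.sup_le
  intro p hp
  exact le_Pplus_of_mem
    (Nat.primeFactors_mono (Int.natAbs_dvd_natAbs.2 h) (Int.natAbs_ne_zero.2 hb) hp)

lemma rad_insulated {m : ℤ} (h : Insulated m) : primorial (Pplus m) = rad m := by
  unfold rad primorial
  apply Finset.prod_congr _ (fun _ _ => rfl)
  apply Finset.Subset.antisymm
  · intro p hp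
    rw [Finset.mem_filter, Finset.mem_range] at hp
    refine Nat.mem_primeFactors.2 ⟨hp.2, ?_, Int.natAbs_ne_zero.2 h.1⟩
    exact Int.natCast_dvd.1 (h.2 p hp.2 (by omega))
  · intro p hp
    exact Finset.mem_filter.2 ⟨Finset.mem_range.2 (by have := le_Pplus_of_mem hp; omega),
      Nat.prime_of_mem_primeFactors hp⟩

lemma rad_mul_dvd (a b : ℤ) (ha : a ≠ 0) (hb : b ≠ 0) : rad (a*b) ∣ rad a * rad b := by
  unfold rad
  rw [Int.natAbs_mul, Nat.primeFactors_mul (Int.natAbs_ne_zero.2 ha) (Int.natAbs_ne_zero.2 hb),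
    ← Finset.union_sdiff_self_eq_union, Finset.prod_union Finset.disjoint_sdiff]
  exact mul_dvd_mul dvd_rfl (Finset.prod_dvd_prod_of_subset _ _ _ Finset.sdiff_subset)

lemma rad_nat_le (I : ℕ) (hI : 0 < I) : rad (I:ℤ) ≤ I := by
  unfold rad
  rw [Int.natAbs_natCast]
  exact Nat.le_of_dvd hI (Nat.prod_primeFactors_dvd I)

lemma insulator_spec (m : ℤ) (hm : m ≠ 0) : 0 < insulator m ∧ Insulated (m * insulator m) := by
  have hins : Insulated (m * primorial (Pplus m)) := by
    have hP0 : ((primorial (Pplus m) : ℤ)) ≠ 0 := by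
      exact_mod_cast (primorial_pos (Pplus m)).ne'
    have hmul : m * (primorial (Pplus m) : ℤ) ≠ 0 := mul_ne_zero hm hP0
    refine ⟨hmul, ?_⟩
    intro p hp hple
    have h1 : Pplus (m * primorial (Pplus m)) ≤ Pplus m := by
      apply max_le _ (one_le_Pplus m)
      apply Finset.sup_le
      intro q hq
      have hq' := Nat.prime_of_mem_primeFactors hq
      have hqdvd : q ∣ m.natAbs * primorial (Pplus m) := by
        have := Nat.dvd_of_mem_primeFactors hq
        rwa [Int.natAbs_mul, Int.natAbs_natCast] at this
      rcases (Nat.Prime.dvd_mul hq').1 hqdvd with h | h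
      · exact le_Pplus_of_mem (Nat.mem_primeFactors.2 ⟨hq', h, Int.natAbs_ne_zero.2 hm⟩)
      · exact le_trans (prime_le_of_dvd_primorial hq' h) (le_refl _)
    have hdvd : p ∣ primorial (Pplus m) := prime_dvd_primorial hp (le_trans hple h1)
    exact Dvd.dvd.mul_left (by exact_mod_cast hdvd) m
  have hmem : insulator m ∈ {I : ℕ | 0 < I ∧ Insulated (m * I)} :=
    Nat.sInf_mem ⟨primorial (Pplus m), primorial_pos _, hins⟩
  exact hmem

end SandwichAux

open SandwichAux in
/-- The sandwich lemma: if `P⁺(n_k) → ∞` and the insulators `𝔦(n_k)` are bounded,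
then for `0 < α < log 2` and `β > log 4` we eventually have
`α P⁺(n_k) < log rad(n_k) < β P⁺(n_k)`. -/
theorem sandwich (n : ℕ → ℤ) (hn : ∀ k, n k ≠ 0)
    (htend : Tendsto (fun k => (Pplus (n k) : ℝ)) atTop atTop)
    (hbdd : ∃ B : ℕ, ∀ k, insulator (n k) ≤ B)
    (α β : ℝ) (hα0 : 0 < α) (hα : α < Real.log 2) (hβ : Real.log 4 < β) :
    ∀ᶠ k in atTop,
      α * (Pplus (n k) : ℝ) < Real.log (rad (n k) : ℝ) ∧
      Real.log (rad (n k) : ℝ) < β * (Pplus (n k) : ℝ) := by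
  obtain ⟨B, hB⟩ := hbdd
  have hP : Tendsto (fun k => Pplus (n k)) atTop atTop := tendsto_natCast_atTop_iff.mp htend
  filter_upwards [hP.eventually (theta_lower hα0 hα (Real.log B))] with k hk
  set P := Pplus (n k) with hPdef
  set I := insulator (n k) with hIdef
  obtain ⟨hIpos, hIins⟩ := insulator_spec (n k) (hn k)
  have hInz : (I:ℤ) ≠ 0 := by exact_mod_cast hIpos.ne'
  have hnI : n k * I ≠ 0 := mul_ne_zero (hn k) hInz
  have hB1 : 1 ≤ B := le_trans hIpos (hB k)
  have h1 : primorial P ≤ rad (n k) * B := by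
    calc primorial P ≤ primorial (Pplus (n k * I)) :=
        SandwichAux.primorial_mono (Pplus_le_of_dvd (dvd_mul_right _ _) hnI)
    _ = rad (n k * I) := rad_insulated hIins
    _ ≤ rad (n k) * rad (I:ℤ) :=
        Nat.le_of_dvd (Nat.mul_pos (rad_pos _) (rad_pos _)) (rad_mul_dvd _ _ (hn k) hInz)
    _ ≤ rad (n k) * B := Nat.mul_le_mul_left _ (le_trans (rad_nat_le I hIpos) (hB k))
  constructor
  · have hlog : Real.log (primorial P) ≤ Real.log (rad (n k)) + Real.log B := by
      rw [← Real.log_mul (by exact_mod_cast (rad_pos (n k)).ne')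
        (by exact_mod_cast (show B ≠ 0 by omega))]
      apply Real.log_le_log (by exact_mod_cast primorial_pos P)
      exact_mod_cast h1
    linarith
  · have h2 : rad (n k) ≤ primorial P := Nat.le_of_dvd (primorial_pos _) (rad_dvd_primorial (n k))
    have h3 : primorial P ≤ 4 ^ P := primorial_le_4_pow P
    have h4 : Real.log (rad (n k)) ≤ P * Real.log 4 := by
      calc Real.log (rad (n k)) ≤ Real.log ((4:ℝ)^P) :=
          Real.log_le_log (by exact_mod_cast rad_pos (n k)) (by exact_mod_cast le_trans h2 h3)
      _ = P * Real.log 4 := by rw [Real.log_pow]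
    have hP1 : (1:ℝ) ≤ (P:ℝ) := by exact_mod_cast one_le_Pplus (n k)
    nlinarith [Real.log_pos (by norm_num : (1:ℝ) < 4)]
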